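/- Arm Lemma (non-crossing, weakly-above form). Let u_0, u_1, ..., u_m and v_0, v_1, ..., v_m be points of ℝ² (identified with ℂ) such that: (i) u_0 = v_0; (ii) |u_j − u_{j−1}| = |v_j − v_{j−1}| for j = 1, ..., m; (iii) for each j = 1, ..., m the differences u_j − u_{j−1} and v_j − v_{j−1} are nonzero and their arguments lie in the open interval (−π/10, π/10); (iv) arg(v_j − v_{j−1}) ≥ arg(u_j − u_{j−1}) for each j = 1, ..., m. Then the broken line through v_0, ..., v_m lies weakly above the broken line through u_0, ..., u_m: for all indices i, j ∈ {1, ..., m} and all points p ∈ [u_{i−1}, u_i] and q ∈ [v_{j−1}, v_j] whose first coordinates are equal, the second coordinate of q is greater than or equal to the second coordinate of p. In particular the two broken lines do not cross. -/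

import Mathlib

open Complex Real Set


/-- Direction cone: vectors with argument in `(-π/10, π/10)`. -/
def ArmKv (z : ℂ) : Prop := Real.cos (π/10) * |z.im| ≤ Real.sin (π/10) * z.re

/-- Difference cone: nearly vertical, pointing up. -/
def ArmKd (z : ℂ) : Prop := Real.cos (π/10) * |z.re| ≤ Real.sin (π/10) * z.im

lemma arm_s10_pos : 0 < Real.sin (π/10) :=
  Real.sin_pos_of_pos_of_lt_pi (by positivity) (by linarith [Real.pi_pos])

lemma arm_c10_pos : 0 < Real.cos (π/10) :=
  Real.cos_pos_of_mem_Ioo ⟨by linarith [Real.pi_pos], by linarith [Real.pi_pos]⟩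

lemma arm_s10_le_c10 : Real.sin (π/10) ≤ Real.cos (π/10) := by
  rw [← Real.sin_pi_div_two_sub]
  apply Real.sin_le_sin_of_le_of_le_pi_div_two (by linarith [Real.pi_pos]) (by linarith [Real.pi_pos])
  linarith [Real.pi_pos]

lemma arm_core {x : ℝ} (hx : |x| < π/10) :
    Real.cos (π/10) * |Real.sin x| ≤ Real.sin (π/10) * Real.cos x := by
  have hpi := Real.pi_pos
  have hxabs : |Real.sin x| = Real.sin |x| := by
    rcases le_or_gt 0 x with h | h
    · rw [_root_.abs_of_nonneg h, _root_.abs_of_nonneg (Real.sin_nonneg_of_nonneg_of_le_pi h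
        (by cases abs_lt.mp hx; linarith))]
    · rw [abs_of_neg h, abs_of_neg, Real.sin_neg]
      exact Real.sin_neg_of_neg_of_neg_pi_lt h (by cases abs_lt.mp hx; linarith)
  rw [hxabs, ← Real.cos_abs x]
  have h0 : 0 ≤ |x| := abs_nonneg x
  have := Real.sin_nonneg_of_nonneg_of_le_pi (x := π/10 - |x|) (by linarith) (by linarith)
  rw [Real.sin_sub] at this
  nlinarith

lemma arm_Kv_zero : ArmKv 0 := by simp [ArmKv]

lemma arm_Kv_add {z w : ℂ} (hz : ArmKv z) (hw : ArmKv w) : ArmKv (z + w) := by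
  have := abs_add_le z.im w.im
  have hc := arm_c10_pos
  simp only [ArmKv, Complex.add_im, Complex.add_re] at *
  nlinarith

lemma arm_Kv_smul {a : ℝ} {z : ℂ} (ha : 0 ≤ a) (hz : ArmKv z) : ArmKv (a • z) := by
  simp only [ArmKv, Complex.smul_im, Complex.smul_re, smul_eq_mul, abs_mul, _root_.abs_of_nonneg ha] at *
  nlinarith

lemma arm_Kd_zero : ArmKd 0 := by simp [ArmKd]

lemma arm_Kd_add {z w : ℂ} (hz : ArmKd z) (hw : ArmKd w) : ArmKd (z + w) := by
  have := abs_add_le z.re w.re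
  have hc := arm_c10_pos
  simp only [ArmKd, Complex.add_im, Complex.add_re] at *
  nlinarith

lemma arm_Kd_smul {a : ℝ} {z : ℂ} (ha : 0 ≤ a) (hz : ArmKd z) : ArmKd (a • z) := by
  simp only [ArmKd, Complex.smul_im, Complex.smul_re, smul_eq_mul, abs_mul, _root_.abs_of_nonneg ha] at *
  nlinarith

lemma arm_re_eq {z : ℂ} (hz : z ≠ 0) : z.re = ‖z‖ * Real.cos (Complex.arg z) := by
  rw [Complex.cos_arg hz, mul_div_cancel₀ _ ((norm_ne_zero_iff.mpr hz))]

lemma arm_im_eq (z : ℂ) : z.im = ‖z‖ * Real.sin (Complex.arg z) := by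
  rcases eq_or_ne z 0 with rfl | hz
  · simp
  · rw [Complex.sin_arg, mul_div_cancel₀ _ ((norm_ne_zero_iff.mpr hz))]

lemma arm_Kv_of {z : ℂ} (hz : z ≠ 0)
    (harg : Complex.arg z ∈ Set.Ioo (-(π/10)) (π/10)) : ArmKv z := by
  obtain ⟨h1, h2⟩ := harg
  have hcore := arm_core (x := Complex.arg z) (abs_lt.mpr ⟨by linarith, h2⟩)
  have hR : 0 ≤ ‖z‖ := norm_nonneg z
  unfold ArmKv
  rw [arm_re_eq hz, arm_im_eq z, abs_mul, _root_.abs_of_nonneg hR]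
  nlinarith

lemma arm_Kd_of {z w : ℂ} (hz : z ≠ 0) (hw : w ≠ 0)
    (hlen : ‖z‖ = ‖w‖)
    (hargz : Complex.arg z ∈ Set.Ioo (-(π/10)) (π/10))
    (hargw : Complex.arg w ∈ Set.Ioo (-(π/10)) (π/10))
    (hle : Complex.arg z ≤ Complex.arg w) : ArmKd (w - z) := by
  obtain ⟨hz1, hz2⟩ := hargz
  obtain ⟨hw1, hw2⟩ := hargw
  set α := Complex.arg z with hα
  set β := Complex.arg w with hβ
  have hpi := Real.pi_pos
  have hR : 0 ≤ ‖z‖ := norm_nonneg z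
  have hre : (w - z).re = ‖z‖ * (Real.cos β - Real.cos α) := by
    rw [Complex.sub_re, arm_re_eq hz, arm_re_eq hw, hlen]; ring
  have him : (w - z).im = ‖z‖ * (Real.sin β - Real.sin α) := by
    rw [Complex.sub_im, arm_im_eq z, arm_im_eq w, hlen]; ring
  have hcc : Real.cos β - Real.cos α = -2 * Real.sin ((β+α)/2) * Real.sin ((β-α)/2) :=
    Real.cos_sub_cos β α
  have hss : Real.sin β - Real.sin α = 2 * Real.sin ((β-α)/2) * Real.cos ((β+α)/2) :=
    Real.sin_sub_sin β α
  have hδ : 0 ≤ Real.sin ((β-α)/2) :=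
    Real.sin_nonneg_of_nonneg_of_le_pi (by linarith) (by linarith)
  have hcore := arm_core (x := (β+α)/2) (abs_lt.mpr ⟨by linarith, by linarith⟩)
  unfold ArmKd
  rw [hre, him, hcc, hss, abs_mul, _root_.abs_of_nonneg hR, abs_mul, abs_mul, abs_neg]
  rw [_root_.abs_of_nonneg hδ]
  have h2 : |(2:ℝ)| = 2 := by norm_num
  rw [h2]
  have hfac : (0:ℝ) ≤ 2 * ‖z‖ * Real.sin ((β-α)/2) := by positivity
  nlinarith [mul_le_mul_of_nonneg_left hcore hfac]

lemma arm_Kv_weak {z : ℂ} (h : ArmKv z) :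
    Real.cos (π/10) * |z.im| ≤ Real.sin (π/10) * |z.re| :=
  h.trans (mul_le_mul_of_nonneg_left (le_abs_self _) arm_s10_pos.le)



/-- **Arm Lemma (non-crossing, weakly-above form).** -/
theorem arm_lemma_weakly_above (m : ℕ) (u v : ℕ → ℂ)
    (h0 : u 0 = v 0)
    (hlen : ∀ j, 1 ≤ j → j ≤ m → ‖u j - u (j - 1)‖ = ‖v j - v (j - 1)‖)
    (hune : ∀ j, 1 ≤ j → j ≤ m → u j - u (j - 1) ≠ 0)
    (hvne : ∀ j, 1 ≤ j → j ≤ m → v j - v (j - 1) ≠ 0)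
    (huarg : ∀ j, 1 ≤ j → j ≤ m →
      Complex.arg (u j - u (j - 1)) ∈ Set.Ioo (-(π / 10)) (π / 10))
    (hvarg : ∀ j, 1 ≤ j → j ≤ m →
      Complex.arg (v j - v (j - 1)) ∈ Set.Ioo (-(π / 10)) (π / 10))
    (hmono : ∀ j, 1 ≤ j → j ≤ m →
      Complex.arg (u j - u (j - 1)) ≤ Complex.arg (v j - v (j - 1))) :
    ∀ i, 1 ≤ i → i ≤ m → ∀ j, 1 ≤ j → j ≤ m →
      ∀ p ∈ segment ℝ (u (i - 1)) (u i), ∀ q ∈ segment ℝ (v (j - 1)) (v j),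
        p.re = q.re → p.im ≤ q.im := by
  have hKvstep : ∀ k, 1 ≤ k → k ≤ m → ArmKv (v k - v (k-1)) := fun k h1 h2 =>
    arm_Kv_of (hvne k h1 h2) (hvarg k h1 h2)
  have hKvchain : ∀ i j, i ≤ j → j ≤ m → ArmKv (v j - v i) := by
    intro i j hij hjm
    induction j, hij using Nat.le_induction with
    | base => simpa using arm_Kv_zero
    | succ n hn ih =>
      have h1 : ArmKv (v (n+1) - v n) := by
        have := hKvstep (n+1) (by omega) hjm
        simpa using this
      have h2 := ih (by omega)
      have hid : v (n+1) - v i = (v n - v i) + (v (n+1) - v n) := by ring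
      rw [hid]; exact arm_Kv_add h2 h1
  have hKdstep : ∀ k, 1 ≤ k → k ≤ m → ArmKd ((v k - v (k-1)) - (u k - u (k-1))) := fun k h1 h2 =>
    arm_Kd_of (hune k h1 h2) (hvne k h1 h2) (hlen k h1 h2) (huarg k h1 h2) (hvarg k h1 h2)
      (hmono k h1 h2)
  have hKdvert : ∀ k, k ≤ m → ArmKd (v k - u k) := by
    intro k
    induction k with
    | zero => intro _; rw [h0]; simpa using arm_Kd_zero
    | succ n ih =>
      intro hk
      have h1 := hKdstep (n+1) (by omega) hk
      simp only [Nat.add_sub_cancel] at h1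
      have h2 := ih (by omega)
      have hid : v (n+1) - u (n+1) = (v n - u n) + ((v (n+1) - v n) - (u (n+1) - u n)) := by
        ring
      rw [hid]; exact arm_Kd_add h2 h1
  have hpts : ∀ (i j : ℕ) (a b : ℝ), 1 ≤ i → i ≤ j → j ≤ m → 0 ≤ a → a ≤ 1 → 0 ≤ b →
      Real.cos (π/10) * |((v (j-1) + b • (v j - v (j-1))) - (v (i-1) + a • (v i - v (i-1)))).im| ≤
      Real.sin (π/10) * |((v (j-1) + b • (v j - v (j-1))) - (v (i-1) + a • (v i - v (i-1)))).re| := by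
    intro i j a b hi1 hij hjm ha0 ha1 hb0
    rcases eq_or_lt_of_le hij with rfl | hlt
    · have hid : (v (i-1) + b • (v i - v (i-1))) - (v (i-1) + a • (v i - v (i-1)))
          = (b - a) • (v i - v (i-1)) := by
        simp only [Complex.real_smul]; push_cast; ring
      rw [hid]
      have h1 := arm_Kv_weak (hKvstep i hi1 hjm)
      simp only [Complex.smul_im, Complex.smul_re, smul_eq_mul, abs_mul]
      nlinarith [abs_nonneg (b-a)]
    · have hid : (v (j-1) + b • (v j - v (j-1))) - (v (i-1) + a • (v i - v (i-1)))
          = (v (j-1) - v i) + ((1-a) • (v i - v (i-1)) + b • (v j - v (j-1))) := by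
        simp only [Complex.real_smul]; push_cast; ring
      rw [hid]
      exact arm_Kv_weak (arm_Kv_add (hKvchain i (j-1) (by omega) (by omega))
        (arm_Kv_add (arm_Kv_smul (by linarith) (hKvstep i hi1 (by omega)))
          (arm_Kv_smul hb0 (hKvstep j (by omega) hjm))))
  intro i hi1 him j hj1 hjm p hp q hq hre
  rw [segment_eq_image'] at hp hq
  obtain ⟨a, ⟨ha0, ha1⟩, rfl⟩ := hp
  obtain ⟨b, ⟨hb0, hb1⟩, rfl⟩ := hq
  set P := u (i-1) + a • (u i - u (i-1)) with hPdef
  set Q := v (j-1) + b • (v j - v (j-1)) with hQdef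
  set Q0 := v (i-1) + a • (v i - v (i-1)) with hQ0def
  have hA : ArmKd (Q0 - P) := by
    have hid : Q0 - P = (v (i-1) - u (i-1)) + a • ((v i - v (i-1)) - (u i - u (i-1))) := by
      rw [hQ0def, hPdef]; simp only [Complex.real_smul]; ring
    rw [hid]
    exact arm_Kd_add (hKdvert (i-1) (by omega)) (arm_Kd_smul ha0 (hKdstep i hi1 him))
  have hB : Real.cos (π/10) * |(Q - Q0).im| ≤ Real.sin (π/10) * |(Q - Q0).re| := by
    rcases le_or_gt i j with h | h
    · exact hpts i j a b hi1 h hjm ha0 ha1 hb0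
    · have h2 := hpts j i b a hj1 h.le him hb0 hb1 ha0
      have e1 : Q0 - Q = -(Q - Q0) := by ring
      rw [← hQ0def, ← hQdef, e1, Complex.neg_im, Complex.neg_re, abs_neg, abs_neg] at h2
      exact h2
  have hre' : (Q - Q0).re = -((Q0 - P).re) := by
    have h5 : P.re = Q.re := hre
    simp only [Complex.sub_re]; linarith
  have him' : Q.im - P.im = (Q - Q0).im + (Q0 - P).im := by
    simp only [Complex.sub_im]; ring
  have hs := arm_s10_pos
  have hc := arm_c10_pos
  have hsc := arm_s10_le_c10
  unfold ArmKd at hA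
  rw [hre', abs_neg] at hB
  have key : 0 ≤ (Q - Q0).im + (Q0 - P).im := by
    nlinarith [neg_abs_le (Q - Q0).im, abs_nonneg (Q0 - P).re, abs_nonneg (Q - Q0).im,
      mul_le_mul_of_nonneg_left hA hc.le, mul_le_mul_of_nonneg_left hB hs.le,
      mul_le_mul_of_nonneg_left (neg_abs_le (Q - Q0).im) (mul_nonneg hc.le hs.le)]
  linarith [him']
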